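/- The subharmonicity of $\varphi \circ g$ on the punctured disc plus boundedness yields subharmonicity with value extension: let $\varphi$ be a continuous real function on $\mathbb{D}$ such that for every $0 < r < 1$ and every $z$ with $0 < |z| < 1 - r$ (and the disc of radius $r$ around $z$ avoiding $0$), $\varphi(z) \le \frac{1}{2\pi}\int_0^{2\pi} \varphi(z + r e^{i\theta})\, d\theta$. Then the sub-mean value inequality also holds at $z = 0$: $\varphi(0) \le \frac{1}{2\pi}\int_0^{2\pi} \varphi(r e^{i\theta})\, d\theta$ for all $0 < r < 1$. -/

import Mathlib

open Metric Complex


lemma mvp_entireish (f : ℂ → ℂ) (c : ℂ) (s : ℝ) (hs : 0 < s)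
    (hc : ContinuousOn f (closedBall c s))
    (hd : ∀ z ∈ ball c s, DifferentiableAt ℂ f z) :
    ∫ θ in (0:ℝ)..(2 * Real.pi), f (c + s * Complex.exp (θ * Complex.I))
      = 2 * Real.pi * f c := by
  have h := Complex.circleIntegral_sub_center_inv_smul_of_differentiable_on_off_countable
    (f := f) (c := c) (s := ∅) hs Set.countable_empty hc (fun z hz => hd z hz.1)
  rw [circleIntegral] at h
  simp only [deriv_circleMap, circleMap, smul_eq_mul] at h
  have h2 : ∀ θ : ℝ, (0 + s * Complex.exp (θ * Complex.I)) * Complex.I *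
      ((c + s * Complex.exp (θ * Complex.I) - c)⁻¹ * f (c + s * Complex.exp (θ * Complex.I)))
      = Complex.I * f (c + s * Complex.exp (θ * Complex.I)) := by
    intro θ
    have hne : (s : ℂ) * Complex.exp (θ * Complex.I) ≠ 0 := by
      apply mul_ne_zero
      · exact_mod_cast hs.ne'
      · exact Complex.exp_ne_zero _
    field_simp
    rw [zero_add, add_sub_cancel_left, mul_div_cancel_left₀ _ hne]
  simp only [h2] at h
  rw [intervalIntegral.integral_const_mul] at h
  have h' : Complex.I * (∫ θ in (0:ℝ)..(2 * Real.pi), f (c + s * Complex.exp (θ * Complex.I)))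
      = Complex.I * (2 * Real.pi * f c) := h.trans (by push_cast; ring)
  exact mul_left_cancel₀ Complex.I_ne_zero h'
lemma cont_circle (c : ℂ) (s : ℝ) :
    Continuous (fun θ : ℝ => c + s * Complex.exp (θ * Complex.I)) := by fun_prop

lemma maps_circle (c : ℂ) (s : ℝ) (hs : 0 ≤ s) (θ : ℝ) :
    c + s * Complex.exp (θ * Complex.I) ∈ closedBall c s := by
  simp [Metric.mem_closedBall, Complex.dist_eq, Complex.norm_exp_ofReal_mul_I, _root_.abs_of_nonneg hs]

lemma int_circle (P : ℂ → ℂ) (c : ℂ) (s : ℝ) (hs : 0 ≤ s)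
    (hc : ContinuousOn P (closedBall c s)) :
    IntervalIntegrable (fun θ : ℝ => P (c + s * Complex.exp (θ * Complex.I)))
      MeasureTheory.volume 0 (2 * Real.pi) := by
  apply ContinuousOn.intervalIntegrable
  exact hc.comp (cont_circle c s).continuousOn (fun θ _ => maps_circle c s hs θ)

lemma mvp_re (P : ℂ → ℂ) (c : ℂ) (s : ℝ) (hs : 0 < s)
    (hc : ContinuousOn P (closedBall c s))
    (hd : ∀ z ∈ ball c s, DifferentiableAt ℂ P z) :
    ∫ θ in (0:ℝ)..(2 * Real.pi), (P (c + s * Complex.exp (θ * Complex.I))).re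
      = 2 * Real.pi * (P c).re := by
  have h := mvp_entireish P c s hs hc hd
  have hint := int_circle P c s hs.le hc
  have := (Complex.reCLM.intervalIntegral_comp_comm hint)
  simp only [Complex.reCLM_apply] at this
  rw [this, h]
  simp

lemma mvp_log (z : ℂ) (s : ℝ) (hs : 0 < s) (hlt : s < ‖z‖) :
    ∫ θ in (0:ℝ)..(2 * Real.pi), Real.log (‖z + s * Complex.exp (θ * Complex.I)‖)
      = 2 * Real.pi * Real.log (‖z‖) := by
  set x : ℝ := ‖z‖ with hx
  have hx0 : 0 < x := hs.trans hlt
  set a : ℝ := Complex.arg z with ha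
  set G : ℝ → ℝ := fun t => Real.log (‖(x:ℂ) + s * Complex.exp (t * Complex.I)‖)
    with hG
  have hpt : ∀ θ : ℝ, Real.log (‖z + s * Complex.exp (θ * Complex.I)‖)
      = G (θ - a) := by
    intro θ
    have hz' : (x:ℂ) * Complex.exp (a * Complex.I) = z := Complex.norm_mul_exp_arg_mul_I z
    have he : Complex.exp (a * Complex.I) * Complex.exp ((↑(θ - a) : ℂ) * Complex.I)
        = Complex.exp (θ * Complex.I) := by
      rw [← Complex.exp_add]; congr 1; push_cast; ring
    have : z + s * Complex.exp (θ * Complex.I)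
        = Complex.exp (a * Complex.I) * ((x:ℂ) + s * Complex.exp ((↑(θ - a) : ℂ) * Complex.I)) := by
      rw [mul_add, mul_left_comm, he, mul_comm (Complex.exp _) ((x:ℂ)), hz']
    rw [this, norm_mul, Complex.norm_exp_ofReal_mul_I, one_mul]
  have hper : Function.Periodic G (2 * Real.pi) := by
    intro t
    simp only [hG]
    congr 2
    push_cast
    rw [add_mul, Complex.exp_add]
    simp [Complex.exp_two_pi_mul_I]
  calc ∫ θ in (0:ℝ)..(2 * Real.pi), Real.log (‖z + s * Complex.exp (θ * Complex.I)‖)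
      = ∫ θ in (0:ℝ)..(2 * Real.pi), G (θ - a) := by
        apply intervalIntegral.integral_congr; intro θ _; exact hpt θ
    _ = ∫ t in (0 - a)..(2 * Real.pi - a), G t := by
        rw [intervalIntegral.integral_comp_sub_right G a]
    _ = ∫ t in (-a)..(-a + 2 * Real.pi), G t := by rw [zero_sub]; ring_nf
    _ = ∫ t in (0:ℝ)..(0 + 2 * Real.pi), G t := hper.intervalIntegral_add_eq (-a) 0
    _ = 2 * Real.pi * Real.log x := by
        rw [zero_add]
        have hc : ContinuousOn Complex.log (closedBall (x:ℂ) s) := by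
          apply ContinuousOn.mono (fun w hw => (continuousAt_clog hw).continuousWithinAt)
          intro w hw
          simp only [Metric.mem_closedBall, Complex.dist_eq] at hw
          have : |w.re - x| ≤ s := by
            calc |w.re - x| = |(w - (x:ℂ)).re| := by simp
              _ ≤ ‖w - (x:ℂ)‖ := Complex.abs_re_le_norm _
              _ ≤ s := hw
          have hre : 0 < w.re := by
            have := abs_le.1 this
            linarith
          exact Or.inl hre
        have hd : ∀ w ∈ ball (x:ℂ) s, DifferentiableAt ℂ Complex.log w := by
          intro w hw
          simp only [Metric.mem_ball, Complex.dist_eq] at hw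
          have : |w.re - x| < s := by
            calc |w.re - x| = |(w - (x:ℂ)).re| := by simp
              _ ≤ ‖w - (x:ℂ)‖ := Complex.abs_re_le_norm _
              _ < s := hw
          have hre : 0 < w.re := by
            have := abs_lt.1 this
            linarith
          exact Complex.differentiableAt_log (Or.inl hre)
        have := mvp_re Complex.log (x:ℂ) s hs hc hd
        have hre : ∀ w : ℂ, (Complex.log w).re = Real.log (‖w‖) := fun w =>
          Complex.log_re w
        simp only [hre] at this
        rw [show Real.log (‖(x:ℂ)‖) = Real.log x by
          rw [Complex.norm_real, Real.norm_eq_abs, abs_of_pos hx0]] at this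
        exact this
lemma mvp_sq (z : ℂ) (s : ℝ) :
    ∫ θ in (0:ℝ)..(2 * Real.pi), ‖z + s * Complex.exp (θ * Complex.I)‖ ^ 2
      = 2 * Real.pi * (‖z‖ ^ 2 + s ^ 2) := by
  have h0 : ∫ θ in (0:ℝ)..(2 * Real.pi),
      (((starRingEnd ℂ) z * s) * Complex.exp (θ * Complex.I)).re = 0 := by
    have := mvp_re (fun w => ((starRingEnd ℂ) z * s) * w) 0 1 one_pos
      (by fun_prop) (fun w _ => by fun_prop)
    simpa using this
  have hpt : ∀ θ : ℝ, ‖z + s * Complex.exp (θ * Complex.I)‖ ^ 2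
      = (‖z‖ ^ 2 + s ^ 2)
        + 2 * (((starRingEnd ℂ) z * s) * Complex.exp (θ * Complex.I)).re := by
    intro θ
    rw [Complex.sq_norm, Complex.sq_norm z, Complex.normSq_add]
    have h1 : Complex.normSq ((s:ℂ) * Complex.exp (θ * Complex.I)) = s ^ 2 := by
      rw [Complex.normSq_eq_norm_sq, norm_mul, Complex.norm_exp_ofReal_mul_I, mul_one,
        Complex.norm_real, Real.norm_eq_abs, _root_.sq_abs]
    have h2 : z * (starRingEnd ℂ) ((s:ℂ) * Complex.exp (θ * Complex.I))
        = (starRingEnd ℂ) (((starRingEnd ℂ) z * s) * Complex.exp (θ * Complex.I)) := by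
      simp only [map_mul, Complex.conj_conj, Complex.conj_ofReal]
      ring
    rw [h1, h2, Complex.conj_re]
  rw [intervalIntegral.integral_congr (g := fun θ : ℝ => (‖z‖ ^ 2 + s ^ 2)
        + 2 * (((starRingEnd ℂ) z * s) * Complex.exp (θ * Complex.I)).re)
      (fun θ _ => hpt θ)]
  rw [intervalIntegral.integral_add (intervalIntegrable_const) (by apply Continuous.intervalIntegrable; fun_prop),
    intervalIntegral.integral_const_mul, h0, intervalIntegral.integral_const]
  simp only [smul_eq_mul, mul_zero, add_zero]
  ring
lemma int_circle_re (ψ : ℂ → ℝ) (c : ℂ) (s : ℝ) (hs : 0 ≤ s)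
    (hc : ContinuousOn ψ (closedBall c s)) :
    IntervalIntegrable (fun θ : ℝ => ψ (c + s * Complex.exp (θ * Complex.I)))
      MeasureTheory.volume 0 (2 * Real.pi) := by
  apply ContinuousOn.intervalIntegrable
  exact hc.comp (cont_circle c s).continuousOn (fun θ _ => maps_circle c s hs θ)

lemma abs_bounds {z0 w : ℂ} {s : ℝ} (hw : w ∈ closedBall z0 s) :
    ‖z0‖ - s ≤ ‖w‖ ∧ ‖w‖ ≤ ‖z0‖ + s := by
  rw [Metric.mem_closedBall] at hw
  have h := abs_norm_sub_norm_le w z0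
  rw [← dist_eq_norm] at h
  have h2 := abs_le.1 (h.trans hw)
  constructor <;> linarith [h2.1, h2.2]

lemma chi_contOn (κ η r : ℝ) (hr : 0 < r) (S : Set ℂ) (hS : ∀ w ∈ S, w ≠ 0) (ψ : ℂ → ℝ)
    (hψ : ContinuousOn ψ S) :
    ContinuousOn (fun w => ψ w + κ * Real.log (‖w‖ / r)
      + η * ‖w‖ ^ 2) S := by
  apply ContinuousOn.add
  · apply ContinuousOn.add hψ
    apply continuousOn_const.mul
    intro w hw
    apply ContinuousAt.continuousWithinAt
    have hne : ‖w‖ / r ≠ 0 :=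
      div_ne_zero (norm_ne_zero_iff.mpr (hS w hw)) hr.ne'
    have h1 : ContinuousAt (fun w : ℂ => ‖w‖ / r) w :=
      (continuous_norm.div_const r).continuousAt
    exact ContinuousAt.comp (g := Real.log) (Real.continuousAt_log hne) h1
  · exact (continuous_const.mul ((continuous_norm.pow 2))).continuousOn

set_option maxHeartbeats 1000000 in
lemma submean_bound (ψ : ℂ → ℝ) (r : ℝ) (hr0 : 0 < r) (hr1 : r < 1)
    (hψc : ContinuousOn ψ (ball (0:ℂ) 1))
    (hψsub : ∀ (z : ℂ) (s : ℝ), z ≠ 0 → 0 < s →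
      closedBall z s ⊆ ball (0:ℂ) 1 \ {0} →
      2 * Real.pi * ψ z ≤ ∫ θ in (0:ℝ)..(2 * Real.pi), ψ (z + s * Complex.exp (θ * Complex.I)))
    (ε : ℝ) (hb : ∀ w : ℂ, ‖w‖ = r → ψ w ≤ ε) :
    ψ 0 ≤ ε := by
  have hballr : closedBall (0:ℂ) r ⊆ ball (0:ℂ) 1 := closedBall_subset_ball hr1
  obtain ⟨wB, hwB, hBmax⟩ := (isCompact_closedBall (0:ℂ) r).exists_isMaxOn
    ⟨0, by simp [hr0.le]⟩ (hψc.mono hballr)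
  set B : ℝ := ψ wB with hB
  have hBbound : ∀ w ∈ closedBall (0:ℂ) r, ψ w ≤ B := fun w hw => hBmax hw
  have key : ∀ κ η δ : ℝ, 0 < κ → 0 < η → 0 < δ → δ < r →
      ∀ z : ℂ, δ ≤ ‖z‖ → ‖z‖ ≤ r →
      ψ z + κ * Real.log (‖z‖ / r) + η * ‖z‖ ^ 2
        ≤ max (ε + η * r ^ 2) (B + κ * Real.log (δ / r) + η * δ ^ 2) := by
    intro κ η δ hκ hη hδ hδr z hz1 hz2
    set χ : ℂ → ℝ := fun w => ψ w + κ * Real.log (‖w‖ / r)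
      + η * ‖w‖ ^ 2 with hχ
    set A : Set ℂ := closedBall (0:ℂ) r \ ball (0:ℂ) δ with hA
    have hmemA : ∀ w : ℂ, w ∈ A ↔ δ ≤ ‖w‖ ∧ ‖w‖ ≤ r := by
      intro w
      rw [hA, Set.mem_diff, Metric.mem_closedBall, Metric.mem_ball, Complex.dist_eq, not_lt,
        sub_zero]
      tauto
    have hAne0 : ∀ w ∈ A, w ≠ 0 := by
      intro w hw h0
      rw [hmemA] at hw
      rw [h0] at hw
      simp only [norm_zero] at hw
      linarith [hw.1]
    have hAsub : A ⊆ ball (0:ℂ) 1 \ {0} := fun w hw =>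
      ⟨hballr hw.1, by simpa using hAne0 w hw⟩
    have hAcomp : IsCompact A := (isCompact_closedBall _ _).diff isOpen_ball
    have hzA : z ∈ A := (hmemA z).2 ⟨hz1, hz2⟩
    have hχcA : ContinuousOn χ A :=
      chi_contOn κ η r hr0 A hAne0 ψ (hψc.mono (fun w hw => hballr hw.1))
    obtain ⟨z0, hz0A, hmax⟩ := hAcomp.exists_isMaxOn ⟨z, hzA⟩ hχcA
    have hz0mem := (hmemA z0).1 hz0A
    have hz0ne : z0 ≠ 0 := hAne0 z0 hz0A
    have hbdry : ‖z0‖ = δ ∨ ‖z0‖ = r := by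
      by_contra hcon
      push_neg at hcon
      have hδlt : δ < ‖z0‖ := lt_of_le_of_ne hz0mem.1 (Ne.symm hcon.1)
      have hltr : ‖z0‖ < r := lt_of_le_of_ne hz0mem.2 hcon.2
      set s : ℝ := min (‖z0‖ - δ) (r - ‖z0‖) with hs
      have hs0 : 0 < s := lt_min (by linarith) (by linarith)
      have hslt : s < ‖z0‖ := by
        have : s ≤ ‖z0‖ - δ := min_le_left _ _
        linarith
      have hcbA : closedBall z0 s ⊆ A := by
        intro w hw
        obtain ⟨hlo, hhi⟩ := abs_bounds hw
        rw [hmemA]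
        have h1 : s ≤ ‖z0‖ - δ := min_le_left _ _
        have h2 : s ≤ r - ‖z0‖ := min_le_right _ _
        constructor <;> linarith
      have hcb1 : closedBall z0 s ⊆ ball (0:ℂ) 1 \ {0} := fun w hw => hAsub (hcbA hw)
      have hcirc_mem : ∀ θ : ℝ, z0 + s * Complex.exp (θ * Complex.I) ∈ A :=
        fun θ => hcbA (maps_circle z0 s hs0.le θ)
      have hcirc_ne : ∀ θ : ℝ, ‖z0 + s * Complex.exp (θ * Complex.I)‖ ≠ 0 :=
        fun θ => norm_ne_zero_iff.mpr (hAne0 _ (hcirc_mem θ))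
      -- integrability
      have hint1 : IntervalIntegrable
          (fun θ : ℝ => ψ (z0 + s * Complex.exp (θ * Complex.I)))
          MeasureTheory.volume 0 (2 * Real.pi) :=
        int_circle_re ψ z0 s hs0.le (hψc.mono (fun w hw => hballr (by
          rw [Metric.mem_closedBall, Complex.dist_eq, sub_zero]
          exact ((hmemA w).1 (hcbA hw)).2)))
      have hcontlog : ContinuousOn (fun w : ℂ => κ * Real.log (‖w‖ / r))
          (closedBall z0 s) := by
        apply continuousOn_const.mul
        intro w hw
        apply ContinuousAt.continuousWithinAt
        have hne : ‖w‖ / r ≠ 0 :=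
          div_ne_zero (norm_ne_zero_iff.mpr (hAne0 w (hcbA hw))) hr0.ne'
        have h1 : ContinuousAt (fun w : ℂ => ‖w‖ / r) w :=
          (continuous_norm.div_const r).continuousAt
        exact ContinuousAt.comp (g := Real.log) (Real.continuousAt_log hne) h1
      have hint2 : IntervalIntegrable
          (fun θ : ℝ => κ * Real.log (‖z0 + s * Complex.exp (θ * Complex.I)‖ / r))
          MeasureTheory.volume 0 (2 * Real.pi) :=
        int_circle_re (fun w => κ * Real.log (‖w‖ / r)) z0 s hs0.le hcontlog
      have hint3 : IntervalIntegrable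
          (fun θ : ℝ => η * ‖z0 + s * Complex.exp (θ * Complex.I)‖ ^ 2)
          MeasureTheory.volume 0 (2 * Real.pi) := by
        exact (continuous_const.mul ((continuous_norm.comp
          (cont_circle z0 s)).pow 2)).intervalIntegrable _ _
      have hintχ : IntervalIntegrable
          (fun θ : ℝ => χ (z0 + s * Complex.exp (θ * Complex.I)))
          MeasureTheory.volume 0 (2 * Real.pi) := (hint1.add hint2).add hint3
      -- lower bound for the mean of χ
      have hIψ := hψsub z0 s hz0ne hs0 hcb1
      have hIlog : ∫ θ in (0:ℝ)..(2 * Real.pi),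
          Real.log (‖z0 + s * Complex.exp (θ * Complex.I)‖ / r)
          = 2 * Real.pi * Real.log (‖z0‖ / r) := by
        have hcongr : ∀ θ ∈ Set.uIcc (0:ℝ) (2 * Real.pi),
            Real.log (‖z0 + s * Complex.exp (θ * Complex.I)‖ / r)
            = Real.log (‖z0 + s * Complex.exp (θ * Complex.I)‖) - Real.log r :=
          fun θ _ => Real.log_div (hcirc_ne θ) hr0.ne'
        rw [intervalIntegral.integral_congr hcongr]
        have hintlogabs : IntervalIntegrable
            (fun θ : ℝ => Real.log (‖z0 + s * Complex.exp (θ * Complex.I)‖))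
            MeasureTheory.volume 0 (2 * Real.pi) := by
          apply int_circle_re (fun w => Real.log (‖w‖)) z0 s hs0.le
          intro w hw
          apply ContinuousAt.continuousWithinAt
          exact ContinuousAt.comp (g := Real.log)
            (Real.continuousAt_log (norm_ne_zero_iff.mpr (hAne0 w (hcbA hw))))
            continuous_norm.continuousAt
        rw [intervalIntegral.integral_sub hintlogabs intervalIntegrable_const,
          mvp_log z0 s hs0 hslt, intervalIntegral.integral_const,
          Real.log_div (norm_ne_zero_iff.mpr hz0ne) hr0.ne']
        simp only [smul_eq_mul, sub_zero]
        ring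
      have hIsq := mvp_sq z0 s
      have hsplit : ∫ θ in (0:ℝ)..(2 * Real.pi), χ (z0 + s * Complex.exp (θ * Complex.I))
          = (∫ θ in (0:ℝ)..(2 * Real.pi), ψ (z0 + s * Complex.exp (θ * Complex.I)))
          + (∫ θ in (0:ℝ)..(2 * Real.pi),
              κ * Real.log (‖z0 + s * Complex.exp (θ * Complex.I)‖ / r))
          + (∫ θ in (0:ℝ)..(2 * Real.pi),
              η * ‖z0 + s * Complex.exp (θ * Complex.I)‖ ^ 2) := by
        rw [← intervalIntegral.integral_add hint1 hint2,
          ← intervalIntegral.integral_add (hint1.add hint2) hint3]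
      have hlower : 2 * Real.pi * χ z0 + 2 * Real.pi * η * s ^ 2
          ≤ ∫ θ in (0:ℝ)..(2 * Real.pi), χ (z0 + s * Complex.exp (θ * Complex.I)) := by
        rw [hsplit, intervalIntegral.integral_const_mul, intervalIntegral.integral_const_mul,
          hIlog, hIsq]
        simp only [hχ]
        nlinarith [hIψ]
      have hupper : ∫ θ in (0:ℝ)..(2 * Real.pi), χ (z0 + s * Complex.exp (θ * Complex.I))
          ≤ 2 * Real.pi * χ z0 := by
        calc ∫ θ in (0:ℝ)..(2 * Real.pi), χ (z0 + s * Complex.exp (θ * Complex.I))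
            ≤ ∫ _ in (0:ℝ)..(2 * Real.pi), χ z0 :=
              intervalIntegral.integral_mono_on (by positivity) hintχ
                intervalIntegrable_const (fun θ _ => hmax (hcirc_mem θ))
          _ = 2 * Real.pi * χ z0 := by
              rw [intervalIntegral.integral_const, sub_zero, smul_eq_mul]
      have hπ := Real.pi_pos
      nlinarith [sq_nonneg s, mul_pos (mul_pos hπ hη) (mul_pos hs0 hs0)]
    -- boundary cases
    have hχz : χ z ≤ χ z0 := hmax hzA
    rcases hbdry with hδ0 | hr0'
    · have hψz0 : ψ z0 ≤ B := hBbound z0 (by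
        rw [Metric.mem_closedBall, Complex.dist_eq, sub_zero]; exact hz0mem.2)
      have : χ z0 ≤ B + κ * Real.log (δ / r) + η * δ ^ 2 := by
        simp only [hχ, hδ0]
        nlinarith
      exact le_max_of_le_right (hχz.trans this)
    · have hψz0 : ψ z0 ≤ ε := hb z0 hr0'
      have : χ z0 ≤ ε + η * r ^ 2 := by
        simp only [hχ, hr0', div_self hr0.ne', Real.log_one]
        nlinarith
      exact le_max_of_le_left (hχz.trans this)
  -- step 2 : ψ ≤ ε on punctured disc of radius r
  have step2 : ∀ z : ℂ, 0 < ‖z‖ → ‖z‖ < r → ψ z ≤ ε := by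
    intro z h0 hzr
    apply le_of_forall_pos_le_add
    intro ρ hρ
    set C : ℝ := Real.log (r / ‖z‖) + r ^ 2 with hC
    have hC0 : 0 ≤ C := by
      apply add_nonneg _ (sq_nonneg r)
      apply Real.log_nonneg
      rw [le_div_iff₀ h0]
      linarith
    set κ := ρ / (C + 1) with hκdef
    have hκ : 0 < κ := div_pos hρ (by linarith)
    set δ' := min (‖z‖) (r * Real.exp ((ε - B) / κ)) with hδdef
    have hδ : 0 < δ' := lt_min h0 (mul_pos hr0 (Real.exp_pos _))
    have hδr : δ' < r := lt_of_le_of_lt (min_le_left _ _) hzr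
    have hkey := key κ κ δ' hκ hκ hδ hδr z (min_le_left _ _) hzr.le
    have h2nd : B + κ * Real.log (δ' / r) + κ * δ' ^ 2 ≤ ε + κ * r ^ 2 := by
      have hlog : Real.log (δ' / r) ≤ (ε - B) / κ := by
        rw [Real.log_le_iff_le_exp (div_pos hδ hr0)]
        rw [div_le_iff₀ hr0]
        calc δ' ≤ r * Real.exp ((ε - B) / κ) := min_le_right _ _
          _ = Real.exp ((ε - B) / κ) * r := mul_comm _ _
      have hklog : κ * Real.log (δ' / r) ≤ ε - B := by
        have := mul_le_mul_of_nonneg_left hlog hκ.le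
        rwa [mul_div_cancel₀ _ hκ.ne'] at this
      have hδ'2 : δ' ^ 2 ≤ r ^ 2 := by nlinarith
      nlinarith
    have hboth : ψ z + κ * Real.log (‖z‖ / r) + κ * ‖z‖ ^ 2
        ≤ ε + κ * r ^ 2 := hkey.trans (max_le le_rfl h2nd)
    have hloginv : Real.log (‖z‖ / r) = - Real.log (r / ‖z‖) := by
      rw [← Real.log_inv]
      congr 1
      rw [inv_div]
    have hfin : ψ z ≤ ε + κ * C := by
      rw [hloginv] at hboth
      simp only [hC]
      nlinarith [sq_nonneg (‖z‖)]
    have hκC : κ * C ≤ ρ := by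
      rw [hκdef, div_mul_eq_mul_div, div_le_iff₀ (by linarith : (0:ℝ) < C + 1)]
      nlinarith
    linarith
  -- step 3 : conclude at 0 by continuity
  have hcont0 : ContinuousAt ψ 0 :=
    hψc.continuousAt (isOpen_ball.mem_nhds (by simp))
  have htend : Filter.Tendsto ψ (nhdsWithin (0:ℂ) {(0:ℂ)}ᶜ) (nhds (ψ 0)) :=
    hcont0.continuousWithinAt.tendsto
  apply le_of_tendsto htend
  have hball : Metric.ball (0:ℂ) r ∈ nhds (0:ℂ) := Metric.ball_mem_nhds _ hr0
  filter_upwards [self_mem_nhdsWithin, Filter.mem_inf_of_left hball] with w hw1 hw2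
  · exact step2 w (by
      simpa [norm_pos_iff] using (Set.mem_compl_iff _ _).1 hw1) (by
      rw [Metric.mem_ball, Complex.dist_eq, sub_zero] at hw2; exact hw2)
lemma exists_harmonic_approx (φ : ℂ → ℝ) (r : ℝ) (hr0 : 0 < r) (hr1 : r < 1)
    (hφcont : ContinuousOn φ (ball (0:ℂ) 1)) (ε : ℝ) (hε : 0 < ε) :
    ∃ P Q : ℂ → ℂ, Differentiable ℂ P ∧ Differentiable ℂ Q ∧
      ∀ θ : ℝ, |(P (r * Complex.exp (θ * Complex.I))
          + Q (r * Complex.exp (θ * Complex.I))).re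
        - φ (r * Complex.exp (θ * Complex.I))| ≤ ε := by
  haveI : Fact (0 < 2 * Real.pi) := ⟨by positivity⟩
  have hrC : (r : ℂ) ≠ 0 := by exact_mod_cast hr0.ne'
  set f : ℝ → ℂ := fun θ => ((φ (r * Complex.exp (θ * Complex.I)) : ℝ) : ℂ) with hf
  have hcircle : Continuous (fun θ : ℝ => (r : ℂ) * Complex.exp (θ * Complex.I)) := by fun_prop
  have hmem : ∀ θ : ℝ, (r : ℂ) * Complex.exp (θ * Complex.I) ∈ ball (0:ℂ) 1 := by
    intro θ
    rw [Metric.mem_ball, Complex.dist_eq, sub_zero, norm_mul, Complex.norm_exp_ofReal_mul_I,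
      mul_one, Complex.norm_real, Real.norm_eq_abs, abs_of_pos hr0]
    exact hr1
  have hfc : Continuous f :=
    Complex.continuous_ofReal.comp (hφcont.comp_continuous hcircle hmem)
  have hper : Function.Periodic f (2 * Real.pi) := by
    intro θ
    simp only [hf]
    congr 3
    push_cast
    rw [add_mul, Complex.exp_add]
    simp [Complex.exp_two_pi_mul_I]
  set F : C(AddCircle (2 * Real.pi), ℂ) := ⟨hper.lift, hfc.quotient_liftOn' _⟩ with hF
  have hFmem : F ∈ closure ((Submodule.span ℂ
      (Set.range (@fourier (2 * Real.pi)))) : Set C(AddCircle (2 * Real.pi), ℂ)) := by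
    have h2 : F ∈ (Submodule.span ℂ (Set.range (@fourier (2 * Real.pi)))).topologicalClosure := by
      rw [span_fourier_closure_eq_top]
      trivial
    exact h2
  obtain ⟨g, hgmem, hdist⟩ := Metric.mem_closure_iff.1 hFmem ε hε
  -- span induction
  have hPQ : ∀ gg ∈ Submodule.span ℂ (Set.range (@fourier (2 * Real.pi))),
      ∃ P Q : ℂ → ℂ, Differentiable ℂ P ∧ Differentiable ℂ Q ∧
      ∀ θ : ℝ, P (r * Complex.exp (θ * Complex.I))
        + (starRingEnd ℂ) (Q (r * Complex.exp (θ * Complex.I)))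
        = gg ((θ : ℝ) : AddCircle (2 * Real.pi)) := by
    intro gg hgg
    induction hgg using Submodule.span_induction with
    | mem x hx =>
      obtain ⟨n, rfl⟩ := hx
      rcases le_or_gt 0 n with hn | hn
      · refine ⟨fun w => (w / r) ^ n.toNat, 0, by fun_prop, differentiable_const 0, ?_⟩
        intro θ
        dsimp only
        rw [mul_div_cancel_left₀ _ hrC, ← Complex.exp_nat_mul, fourier_coe_apply]
        simp only [Pi.zero_apply, map_zero, add_zero]
        congr 1
        rw [show ((n.toNat : ℂ)) = (n : ℂ) from by exact_mod_cast Int.toNat_of_nonneg hn]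
        push_cast
        have hπ : (Real.pi : ℂ) ≠ 0 := by exact_mod_cast Real.pi_ne_zero
        field_simp
      · refine ⟨fun _ => 0, fun w => (w / r) ^ (-n).toNat, differentiable_const 0, by fun_prop, ?_⟩
        intro θ
        dsimp only
        rw [mul_div_cancel_left₀ _ hrC, ← Complex.exp_nat_mul, ← Complex.exp_conj,
          fourier_coe_apply]
        simp only [zero_add]
        congr 1
        rw [map_mul, map_mul, Complex.conj_I, Complex.conj_ofReal]
        rw [show (((-n).toNat : ℂ)) = -(n : ℂ) from by
          exact_mod_cast Int.toNat_of_nonneg (by linarith : (0:ℤ) ≤ -n)]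
        have hπ : (Real.pi : ℂ) ≠ 0 := by exact_mod_cast Real.pi_ne_zero
        push_cast
        field_simp
        simp
    | zero => exact ⟨fun _ => 0, fun _ => 0, differentiable_const 0, differentiable_const 0,
        by simp⟩
    | add x y hx hy ihx ihy =>
      obtain ⟨P1, Q1, hP1, hQ1, hb1⟩ := ihx
      obtain ⟨P2, Q2, hP2, hQ2, hb2⟩ := ihy
      exact ⟨P1 + P2, Q1 + Q2, hP1.add hP2, hQ1.add hQ2, fun θ => by
        simp only [Pi.add_apply, map_add, ContinuousMap.add_apply, ← hb1 θ, ← hb2 θ]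
        ring⟩
    | smul a x hx ihx =>
      obtain ⟨P1, Q1, hP1, hQ1, hb1⟩ := ihx
      refine ⟨fun w => a * P1 w, fun w => (starRingEnd ℂ) a * Q1 w,
        (differentiable_const a).mul hP1, (differentiable_const _).mul hQ1, fun θ => ?_⟩
      simp only [map_mul, Complex.conj_conj, ContinuousMap.smul_apply, smul_eq_mul, ← hb1 θ]
      ring
  obtain ⟨P, Q, hP, hQ, hb⟩ := hPQ g hgmem
  refine ⟨P, Q, hP, hQ, fun θ => ?_⟩
  have h1 : (P (r * Complex.exp (θ * Complex.I)) + Q (r * Complex.exp (θ * Complex.I))).re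
      = (g ((θ : ℝ) : AddCircle (2 * Real.pi))).re := by
    rw [← hb θ]
    simp [Complex.add_re, Complex.conj_re]
  have h2 : φ (r * Complex.exp (θ * Complex.I)) = (F ((θ : ℝ) : AddCircle (2 * Real.pi))).re := by
    simp only [hF, ContinuousMap.coe_mk, Function.Periodic.lift_coe, hf, Complex.ofReal_re]
    rfl
  rw [h1, h2]
  have h3 : |(g ((θ : ℝ) : AddCircle (2 * Real.pi))).re
      - (F ((θ : ℝ) : AddCircle (2 * Real.pi))).re|
      ≤ ‖g ((θ : ℝ) : AddCircle (2 * Real.pi))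
        - F ((θ : ℝ) : AddCircle (2 * Real.pi))‖ := by
    rw [← Complex.sub_re]
    exact Complex.abs_re_le_norm _
  refine h3.trans ?_
  rw [← Complex.dist_eq]
  calc dist (g ((θ : ℝ) : AddCircle (2 * Real.pi))) (F ((θ : ℝ) : AddCircle (2 * Real.pi)))
      ≤ dist g F := ContinuousMap.dist_apply_le_dist _
    _ = dist F g := dist_comm _ _
    _ ≤ ε := hdist.le
theorem submean_at_zero_of_submean_off_zero
    (φ : ℂ → ℝ) (hφcont : ContinuousOn φ (Metric.ball (0:ℂ) 1))
    (hsub : ∀ (z : ℂ) (r : ℝ), z ≠ 0 → 0 < r →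
      Metric.closedBall z r ⊆ Metric.ball (0:ℂ) 1 \ {0} →
      φ z ≤ (2 * Real.pi)⁻¹ *
        ∫ θ in (0:ℝ)..(2 * Real.pi), φ (z + r * Complex.exp (θ * Complex.I))) :
    ∀ r : ℝ, 0 < r → r < 1 →
      φ 0 ≤ (2 * Real.pi)⁻¹ *
        ∫ θ in (0:ℝ)..(2 * Real.pi), φ (r * Complex.exp (θ * Complex.I)) := by
  intro r hr0 hr1
  have h2π : (0:ℝ) < 2 * Real.pi := by positivity
  apply le_of_forall_pos_le_add
  intro ε hε
  obtain ⟨P, Q, hP, hQ, happrox⟩ :=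
    exists_harmonic_approx φ r hr0 hr1 hφcont (ε/2) (by positivity)
  set h : ℂ → ℝ := fun w => (P w + Q w).re with hh
  have hPQdiff : Differentiable ℂ (fun w => P w + Q w) := hP.add hQ
  have hhc : Continuous h := Complex.continuous_re.comp hPQdiff.continuous
  have hmvh : ∀ (c : ℂ) (s : ℝ), 0 < s →
      ∫ θ in (0:ℝ)..(2 * Real.pi), h (c + s * Complex.exp (θ * Complex.I)) = 2 * Real.pi * h c :=
    fun c s hs => mvp_re (fun w => P w + Q w) c s hs
      hPQdiff.continuous.continuousOn (fun w _ => hPQdiff w)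
  set ψ : ℂ → ℝ := fun w => φ w - h w with hψ
  have hψc : ContinuousOn ψ (ball (0:ℂ) 1) := hφcont.sub hhc.continuousOn
  have hψsub : ∀ (z : ℂ) (s : ℝ), z ≠ 0 → 0 < s →
      closedBall z s ⊆ ball (0:ℂ) 1 \ {0} →
      2 * Real.pi * ψ z ≤ ∫ θ in (0:ℝ)..(2 * Real.pi),
        ψ (z + s * Complex.exp (θ * Complex.I)) := by
    intro z s hz hs hball
    have hφI := hsub z s hz hs hball
    have hφI2 : 2 * Real.pi * φ z ≤ ∫ θ in (0:ℝ)..(2 * Real.pi),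
        φ (z + s * Complex.exp (θ * Complex.I)) := by
      have := mul_le_mul_of_nonneg_left hφI h2π.le
      rwa [← mul_assoc, mul_inv_cancel₀ h2π.ne', one_mul] at this
    have hsubset : closedBall z s ⊆ ball (0:ℂ) 1 := fun w hw => (hball hw).1
    have hint1 : IntervalIntegrable (fun θ : ℝ => φ (z + s * Complex.exp (θ * Complex.I)))
        MeasureTheory.volume 0 (2 * Real.pi) :=
      int_circle_re φ z s hs.le (hφcont.mono hsubset)
    have hint2 : IntervalIntegrable (fun θ : ℝ => h (z + s * Complex.exp (θ * Complex.I)))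
        MeasureTheory.volume 0 (2 * Real.pi) :=
      (hhc.comp (cont_circle z s)).intervalIntegrable _ _
    have hsplit : ∫ θ in (0:ℝ)..(2 * Real.pi), ψ (z + s * Complex.exp (θ * Complex.I))
        = (∫ θ in (0:ℝ)..(2 * Real.pi), φ (z + s * Complex.exp (θ * Complex.I)))
          - ∫ θ in (0:ℝ)..(2 * Real.pi), h (z + s * Complex.exp (θ * Complex.I)) :=
      intervalIntegral.integral_sub hint1 hint2
    rw [hsplit, hmvh z s hs]
    simp only [hψ]
    linarith
  have hb : ∀ w : ℂ, ‖w‖ = r → ψ w ≤ ε/2 := by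
    intro w hw
    have hwθ : w = (r:ℂ) * Complex.exp ((Complex.arg w : ℝ) * Complex.I) := by
      conv_lhs => rw [← Complex.norm_mul_exp_arg_mul_I w]
      rw [hw]
    have := abs_le.1 (happrox (Complex.arg w))
    simp only [hψ, hh]
    rw [hwθ]
    linarith [this.1]
  have hψ0 := submean_bound ψ r hr0 hr1 hψc hψsub (ε/2) hb
  have hmv0 : ∫ θ in (0:ℝ)..(2 * Real.pi), h ((r:ℂ) * Complex.exp (θ * Complex.I))
      = 2 * Real.pi * h 0 := by
    have := hmvh 0 r hr0
    rw [intervalIntegral.integral_congr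
      (g := fun θ : ℝ => h ((0:ℂ) + r * Complex.exp (θ * Complex.I)))
      (fun θ _ => by simp)]
    exact this
  have hint_h : IntervalIntegrable (fun θ : ℝ => h ((r:ℂ) * Complex.exp (θ * Complex.I)))
      MeasureTheory.volume 0 (2 * Real.pi) := by
    apply Continuous.intervalIntegrable
    apply hhc.comp
    fun_prop
  have hint_φ : IntervalIntegrable (fun θ : ℝ => φ ((r:ℂ) * Complex.exp (θ * Complex.I)))
      MeasureTheory.volume 0 (2 * Real.pi) := by
    apply ContinuousOn.intervalIntegrable
    apply hφcont.comp (by fun_prop : Continuous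
      (fun θ : ℝ => (r:ℂ) * Complex.exp (θ * Complex.I))).continuousOn
    intro θ _
    rw [Metric.mem_ball, Complex.dist_eq, sub_zero, norm_mul, Complex.norm_exp_ofReal_mul_I,
      mul_one, Complex.norm_real, Real.norm_eq_abs, abs_of_pos hr0]
    exact hr1
  have hmono : ∫ θ in (0:ℝ)..(2 * Real.pi), h ((r:ℂ) * Complex.exp (θ * Complex.I))
      ≤ (∫ θ in (0:ℝ)..(2 * Real.pi), φ ((r:ℂ) * Complex.exp (θ * Complex.I))) + Real.pi * ε := by
    calc ∫ θ in (0:ℝ)..(2 * Real.pi), h ((r:ℂ) * Complex.exp (θ * Complex.I))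
        ≤ ∫ θ in (0:ℝ)..(2 * Real.pi), (φ ((r:ℂ) * Complex.exp (θ * Complex.I)) + ε/2) := by
          apply intervalIntegral.integral_mono_on h2π.le hint_h
            (hint_φ.add intervalIntegrable_const)
          intro θ _
          have := abs_le.1 (happrox θ)
          simp only [hh]
          linarith [this.2]
      _ = (∫ θ in (0:ℝ)..(2 * Real.pi), φ ((r:ℂ) * Complex.exp (θ * Complex.I))) + Real.pi * ε := by
          rw [intervalIntegral.integral_add hint_φ intervalIntegrable_const,
            intervalIntegral.integral_const]
          simp only [smul_eq_mul, sub_zero]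
          ring
  have hφ0 : φ 0 ≤ ε/2 + h 0 := by
    have : ψ 0 = φ 0 - h 0 := rfl
    linarith [hψ0, this ▸ hψ0]
  have hh0 : h 0 ≤ (2 * Real.pi)⁻¹ *
      (∫ θ in (0:ℝ)..(2 * Real.pi), φ ((r:ℂ) * Complex.exp (θ * Complex.I))) + ε/2 := by
    have h1 : 2 * Real.pi * h 0 ≤ (∫ θ in (0:ℝ)..(2 * Real.pi),
        φ ((r:ℂ) * Complex.exp (θ * Complex.I))) + Real.pi * ε := hmv0 ▸ hmono
    have h2 := mul_le_mul_of_nonneg_left h1 (inv_nonneg.2 h2π.le)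
    rw [← mul_assoc, inv_mul_cancel₀ h2π.ne', one_mul] at h2
    have h3 : (2 * Real.pi)⁻¹ * ((∫ θ in (0:ℝ)..(2 * Real.pi),
        φ ((r:ℂ) * Complex.exp (θ * Complex.I))) + Real.pi * ε)
        = (2 * Real.pi)⁻¹ * (∫ θ in (0:ℝ)..(2 * Real.pi),
          φ ((r:ℂ) * Complex.exp (θ * Complex.I))) + ε/2 := by
      rw [mul_add]
      congr 1
      field_simp
    linarith [h3 ▸ h2]
  linarith
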